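/- For all integers n and d with 1 < d ≤ n/2, there exists a Boolean function f : {0,1}^n → {0,1} that is computed by some nondeterministic OBDD of width at most d but by no nondeterministic OBDD of width at most d − 1; consequently the class of functions computed by NOBDDs of width at most d − 1 is strictly contained in the class computed by NOBDDs of width at most d. -/

import Mathlib

/-- Number of 1s in a binary string ν ∈ {0,1}^n. -/
def countOnes {n : ℕ} (ν : Fin n → Bool) : ℕ :=
  (Finset.univ.filter (fun i => ν i = true)).card

/-- Number of 0s in a binary string ν ∈ {0,1}^n. -/
def countZeros {n : ℕ} (ν : Fin n → Bool) : ℕ :=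
  (Finset.univ.filter (fun i => ν i = false)).card

/-- Number of 1s among the first `k` bits. -/
def countOnesFirst (k : ℕ) {n : ℕ} (ν : Fin n → Bool) : ℕ :=
  (Finset.univ.filter (fun i : Fin n => (i : ℕ) < k ∧ ν i = true)).card

/-- Number of 0s among the first `k` bits. -/
def countZerosFirst (k : ℕ) {n : ℕ} (ν : Fin n → Bool) : ℕ :=
  (Finset.univ.filter (fun i : Fin n => (i : ℕ) < k ∧ ν i = false)).card

/-- A deterministic OBDD of width `d` on `n` Boolean variables. -/
structure DOBDD (n d : ℕ) where
  ord : Equiv.Perm (Fin n)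
  T : Fin n → Bool → Fin d → Fin d
  start : Fin d
  Accept : Finset (Fin d)

/-- The node reached by a deterministic OBDD after reading all input bits. -/
def DOBDD.run {n d : ℕ} (M : DOBDD n d) (ν : Fin n → Bool) : Fin d :=
  (List.finRange n).foldl (fun v j => M.T j (ν (M.ord j)) v) M.start

def DOBDD.accepts {n d : ℕ} (M : DOBDD n d) (ν : Fin n → Bool) : Prop :=
  M.run ν ∈ M.Accept

/-- A deterministic OBDD computes a total Boolean function. -/
def DOBDD.computes {n d : ℕ} (M : DOBDD n d) (f : (Fin n → Bool) → Bool) : Prop :=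
  ∀ ν, M.accepts ν ↔ f ν = true

/-- A nondeterministic OBDD of width `d` on `n` Boolean variables. -/
structure NOBDD (n d : ℕ) where
  ord : Equiv.Perm (Fin n)
  T : Fin n → Bool → Fin d → Set (Fin d)
  start : Fin d
  Accept : Finset (Fin d)

/-- The set of nodes reachable by a nondeterministic OBDD after reading all input bits. -/
def NOBDD.reach {n d : ℕ} (M : NOBDD n d) (ν : Fin n → Bool) : Set (Fin d) :=
  (List.finRange n).foldl (fun S j => {w | ∃ v ∈ S, w ∈ M.T j (ν (M.ord j)) v}) {M.start}

def NOBDD.accepts {n d : ℕ} (M : NOBDD n d) (ν : Fin n → Bool) : Prop :=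
  ∃ v ∈ M.reach ν, v ∈ M.Accept

/-- A nondeterministic OBDD computes a total Boolean function. -/
def NOBDD.computes {n d : ℕ} (M : NOBDD n d) (f : (Fin n → Bool) → Bool) : Prop :=
  ∀ ν, M.accepts ν ↔ f ν = true

/-- The class of Boolean functions on n variables computed by deterministic
OBDDs of width at most `w`. -/
def OBDDclass (n w : ℕ) : Set ((Fin n → Bool) → Bool) :=
  {f | ∃ d, d ≤ w ∧ ∃ M : DOBDD n d, M.computes f}

/-- The class of Boolean functions on n variables computed by nondeterministic
OBDDs of width at most `w`. -/
def NOBDDclass (n w : ℕ) : Set ((Fin n → Bool) → Bool) :=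
  {f | ∃ d, d ≤ w ∧ ∃ M : NOBDD n d, M.computes f}

/-- Final probability distribution of a stable probabilistic OBDD given by the pair of
left-stochastic matrices `A`, variable order `ord`, and initial node `s`. -/
noncomputable def stableProbRun {n d : ℕ} (A : Bool → Matrix (Fin d) (Fin d) ℝ)
    (ord : Equiv.Perm (Fin n)) (s : Fin d) (ν : Fin n → Bool) : Fin d → ℝ :=
  (List.finRange n).foldl (fun v j => (A (ν (ord j))).mulVec v)
    (fun i => if i = s then 1 else 0)

/-- Final quantum state of a stable ID quantum OBDD given by the pair of matrices `U`
and the initial computational-basis state `q0`, reading bits in the natural order. -/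
noncomputable def quantumRunStable {n d : ℕ} (U : Bool → Matrix (Fin d) (Fin d) ℂ) (q0 : Fin d)
    (ν : Fin n → Bool) : Fin d → ℂ :=
  (List.finRange n).foldl (fun ψ j => (U (ν j)).mulVec ψ)
    (fun i => if i = q0 then 1 else 0)

/-- A quantum OBDD of width `d` on `n` Boolean variables. -/
structure QOBDD (n d : ℕ) where
  ord : Equiv.Perm (Fin n)
  U : Fin n → Bool → Matrix (Fin d) (Fin d) ℂ
  unitary : ∀ j b, U j b ∈ Matrix.unitaryGroup (Fin d) ℂ
  q0 : Fin d
  Accept : Finset (Fin d)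

/-- The final state of a quantum OBDD on input ν. -/
noncomputable def QOBDD.finalState {n d : ℕ} (M : QOBDD n d) (ν : Fin n → Bool) : Fin d → ℂ :=
  (List.finRange n).foldl (fun ψ j => (M.U j (ν (M.ord j))).mulVec ψ)
    (fun i => if i = M.q0 then 1 else 0)

/-- The acceptance probability of a quantum OBDD on input ν. -/
noncomputable def QOBDD.acceptProb {n d : ℕ} (M : QOBDD n d) (ν : Fin n → Bool) : ℝ :=
  ∑ i ∈ M.Accept, Complex.normSq (M.finalState ν i)

/-- `NotO_n(ν) = 0` iff `#0(ν) = #1(ν)`. -/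
def NotO (n : ℕ) (ν : Fin n → Bool) : Bool := !decide (countZeros ν = countOnes ν)

/-- `NotSQUARE_n(ν) = 0` iff `(#0(ν))² = #1(ν)`. -/
def NotSQUARE (n : ℕ) (ν : Fin n → Bool) : Bool := !decide ((countZeros ν) ^ 2 = countOnes ν)

/-- `NotPOWER_n(ν) = 0` iff `2^{#0(ν)} = #1(ν)`. -/
def NotPOWER (n : ℕ) (ν : Fin n → Bool) : Bool := !decide (2 ^ (countZeros ν) = countOnes ν)

/-- `MOD^k_n(ν) = 1` iff `#1(ν) ≡ 0 (mod k)`. -/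
def MODf (n k : ℕ) (ν : Fin n → Bool) : Bool := decide (countOnes ν % k = 0)

/-- `NotO^k_n(ν) = 0` iff `#^k_0(ν) = #^k_1(ν) = k/2`. -/
def NotOk (n k : ℕ) (ν : Fin n → Bool) : Bool :=
  !decide (countZerosFirst k ν = k / 2 ∧ countOnesFirst k ν = k / 2)

/-- The ordered subsequence of value bits `ν_{2i}` (1-indexed, `1 ≤ i ≤ k/2`) whose
marker bit `ν_{2i-1}` equals `b`; `b = false` gives `α(ν)` and `b = true` gives `β(ν)`. -/
def valueSubseq {n : ℕ} (k : ℕ) (b : Bool) (ν : Fin n → Bool) : List Bool :=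
  (List.range (k / 2)).filterMap (fun j =>
    if h : 2 * j + 1 < n then
      if ν ⟨2 * j, by omega⟩ = b then some (ν ⟨2 * j + 1, h⟩) else none
    else none)

/-- `EQS^k_n(ν) = 1` iff `α(ν) = β(ν)`. -/
def EQS (n k : ℕ) (ν : Fin n → Bool) : Bool :=
  decide (valueSubseq k false ν = valueSubseq k true ν)

/-- `NotEQS^k_n(ν) = 1 - EQS^k_n(ν)`. -/
def NotEQS (n k : ℕ) (ν : Fin n → Bool) : Bool := !(EQS n k ν)

namespace NWH


lemma mem_take_finRange {n k : ℕ} {a : Fin n} (h : a ∈ (List.finRange n).take k) :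
    (a : ℕ) < k := by
  rw [List.mem_take_iff_getElem] at h
  obtain ⟨i, hi, rfl⟩ := h
  rw [List.getElem_finRange]
  simp at hi ⊢; omega

lemma mem_drop_finRange {n k : ℕ} {a : Fin n} (h : a ∈ (List.finRange n).drop k) :
    k ≤ (a : ℕ) := by
  rw [List.mem_iff_getElem] at h
  obtain ⟨i, hi, rfl⟩ := h
  rw [List.getElem_drop, List.getElem_finRange]
  simp

lemma countOnes_perm {n : ℕ} (σ : Equiv.Perm (Fin n)) (g : Fin n → Bool) :
    countOnes (fun x => g (σ.symm x)) = countOnes g := by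
  unfold countOnes
  apply Finset.card_bij (fun x _ => σ.symm x)
  · intro a ha
    simp only [Finset.mem_filter, Finset.mem_univ, true_and] at ha ⊢
    exact ha
  · intro a _ b _ hab
    exact σ.symm.injective hab
  · intro b hb
    refine ⟨σ b, ?_, by simp⟩
    simp only [Finset.mem_filter, Finset.mem_univ, true_and] at hb ⊢
    simpa using hb

lemma foldl_set_mem {n d : ℕ} (t : Fin n → Fin d → Set (Fin d)) :
    ∀ (l : List (Fin n)) (S : Set (Fin d)) (w : Fin d),
      w ∈ l.foldl (fun S j => {w | ∃ v ∈ S, w ∈ t j v}) S ↔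
        ∃ v ∈ S, w ∈ l.foldl (fun S j => {w | ∃ v ∈ S, w ∈ t j v}) {v} := by
  intro l
  induction l with
  | nil => intro S w; simp
  | cons j l ih =>
    intro S w
    simp only [List.foldl_cons]
    rw [ih]
    constructor
    · rintro ⟨u, ⟨v, hv, hu⟩, hw⟩
      exact ⟨v, hv, (ih _ w).mpr ⟨u, ⟨v, rfl, hu⟩, hw⟩⟩
    · rintro ⟨v, hv, hw⟩
      obtain ⟨u, hu', hw2⟩ := (ih _ w).mp hw
      obtain ⟨v', hv', hu⟩ := hu'
      rw [Set.mem_singleton_iff] at hv'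
      subst hv'
      exact ⟨u, ⟨v', hv, hu⟩, hw2⟩

lemma foldl_set_det {n d : ℕ} (F : Fin n → Fin d → Fin d) :
    ∀ (l : List (Fin n)) (s : Fin d),
      l.foldl (fun S j => {w | ∃ v ∈ S, w ∈ ({F j v} : Set (Fin d))}) {s}
        = {l.foldl (fun v j => F j v) s} := by
  intro l
  induction l with
  | nil => intro s; rfl
  | cons j l ih =>
    intro s
    simp only [List.foldl_cons]
    rw [← ih (F j s)]
    congr 1
    ext w
    simp

lemma foldl_add {m : ℕ} [NeZero m] {n : ℕ} (c : Fin n → Fin m) :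
    ∀ (l : List (Fin n)) (s : Fin m),
      l.foldl (fun v j => v + c j) s = s + (l.map c).sum := by
  intro l
  induction l with
  | nil => intro s; simp
  | cons j l ih => intro s; simp [ih, add_assoc]


/-- Marker bits for the lower-bound inputs: ones at positions `[0,i) ∪ [k, k+j)`. -/
def lbBits (k i j : ℕ) {n : ℕ} (p : Fin n) : Bool :=
  decide ((p : ℕ) < i) || decide (k ≤ (p : ℕ) ∧ (p : ℕ) < k + j)

/-- The corresponding input for a machine with variable order `σ`. -/
def lbInput {n : ℕ} (σ : Equiv.Perm (Fin n)) (k i j : ℕ) : Fin n → Bool :=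
  fun x => lbBits k i j (σ.symm x)

lemma lb_count {n : ℕ} (σ : Equiv.Perm (Fin n)) (k i j : ℕ)
    (hik : i ≤ k) (hkn : k < n) (hkj : k + j ≤ n) :
    countOnes (lbInput σ k i j) = i + j := by
  have h0 : countOnes (lbInput σ k i j) = countOnes (fun p : Fin n => lbBits k i j p) :=
    countOnes_perm σ _
  rw [h0]
  unfold countOnes
  have hb : ∀ m ∈ Finset.range i ∪ Finset.Ico k (k + j), m < n := by
    intro m hm
    simp only [Finset.mem_union, Finset.mem_range, Finset.mem_Ico] at hm
    omega
  have hfil : Finset.univ.filter (fun p : Fin n => lbBits k i j p = true)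
      = (Finset.range i ∪ Finset.Ico k (k + j)).attachFin hb := by
    ext p
    simp [lbBits, Finset.mem_attachFin]
  rw [hfil, Finset.card_attachFin, Finset.card_union_of_disjoint, Finset.card_range,
    Nat.card_Ico]
  · omega
  · rw [Finset.disjoint_left]
    intro a ha ha'
    simp only [Finset.mem_range] at ha
    simp only [Finset.mem_Ico] at ha'
    omega

/-- One step of a machine `M` on the lower-bound input. -/
def lbStep {n d' : ℕ} (M : NOBDD n d') (k i j : ℕ) : Set (Fin d') → Fin n → Set (Fin d') :=
  fun S jj => {w | ∃ v ∈ S, w ∈ M.T jj (lbBits k i j jj) v}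

/-- Reach set after the prefix of length `k` (the suffix bits are irrelevant there). -/
def lbPre {n d' : ℕ} (M : NOBDD n d') (k i : ℕ) : Set (Fin d') :=
  ((List.finRange n).take k).foldl (lbStep M k i 0) {M.start}

/-- `v` can accept a suffix with `j` ones. -/
def lbAcc {n d' : ℕ} (M : NOBDD n d') (k j : ℕ) (v : Fin d') : Prop :=
  ∃ w ∈ ((List.finRange n).drop k).foldl (lbStep M k 0 j) {v}, w ∈ M.Accept

lemma lb_accepts_iff {n d' : ℕ} (M : NOBDD n d') (k i j : ℕ) (hik : i ≤ k) :
    M.accepts (lbInput M.ord k i j) ↔ ∃ v ∈ lbPre M k i, lbAcc M k j v := by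
  have hreach : M.reach (lbInput M.ord k i j)
      = (List.finRange n).foldl (lbStep M k i j) {M.start} := by
    unfold NOBDD.reach lbStep
    apply List.foldl_ext
    intro S jj _
    simp [lbInput, Equiv.symm_apply_apply]
  have hpre : ((List.finRange n).take k).foldl (lbStep M k i j) {M.start} = lbPre M k i := by
    unfold lbPre
    apply List.foldl_ext
    intro S jj hjj
    have hjk := mem_take_finRange hjj
    unfold lbStep
    have hbits : lbBits k i j jj = lbBits k i 0 jj := by
      have h2 : ¬ (k ≤ (jj : ℕ)) := by omega
      simp [lbBits, h2]
    rw [hbits]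
  have hsuf : ∀ v : Fin d',
      ((List.finRange n).drop k).foldl (lbStep M k i j) {v}
        = ((List.finRange n).drop k).foldl (lbStep M k 0 j) {v} := by
    intro v
    apply List.foldl_ext
    intro S jj hjj
    have hjk := mem_drop_finRange hjj
    unfold lbStep
    have hbits : lbBits k i j jj = lbBits k 0 j jj := by
      have ha : ¬ ((jj : ℕ) < i) := by omega
      have hb2 : ¬ ((jj : ℕ) < 0) := by omega
      simp [lbBits, ha, hb2]
    rw [hbits]
  have hsplit : M.reach (lbInput M.ord k i j)
      = ((List.finRange n).drop k).foldl (lbStep M k i j) (lbPre M k i) := by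
    rw [hreach, ← hpre, ← List.foldl_append, List.take_append_drop]
  unfold NOBDD.accepts
  rw [hsplit]
  constructor
  · rintro ⟨w, hw, hA⟩
    obtain ⟨v, hv, hw'⟩ :=
      (foldl_set_mem (fun jj v => M.T jj (lbBits k i j jj) v) _ _ _).mp hw
    refine ⟨v, hv, ⟨w, ?_, hA⟩⟩
    rw [← hsuf v]
    exact hw'
  · rintro ⟨v, hv, w, hw, hA⟩
    refine ⟨w, ?_, hA⟩
    apply (foldl_set_mem (fun jj v => M.T jj (lbBits k i j jj) v) _ _ _).mpr
    refine ⟨v, hv, ?_⟩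
    show w ∈ ((List.finRange n).drop k).foldl (lbStep M k i j) {v}
    rw [hsuf v]
    exact hw

open Fin.NatCast Fin.CommRing in
lemma modf_mem {n d : ℕ} (hd : 0 < d) : MODf n d ∈ NOBDDclass n d := by
  haveI : NeZero d := ⟨by omega⟩
  refine ⟨d, le_rfl,
    ⟨Equiv.refl _, fun _ b v => {v + (if b then 1 else 0)}, 0, {0}⟩, fun ν => ?_⟩
  have hreach : NOBDD.reach
      (⟨Equiv.refl _, fun _ b v => {v + (if b then 1 else 0)}, 0, {0}⟩ : NOBDD n d) ν
      = {(List.finRange n).foldl (fun v j => v + (if ν j then 1 else 0)) (0 : Fin d)} :=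
    foldl_set_det (fun j v => v + (if ν j then 1 else 0)) _ _
  have hrun : (List.finRange n).foldl (fun v j => v + (if ν j then 1 else 0)) (0 : Fin d)
      = ((countOnes ν : ℕ) : Fin d) := by
    rw [foldl_add (fun j => if ν j then (1 : Fin d) else 0), zero_add,
      ← Fin.sum_univ_def]
    rw [countOnes, Finset.card_filter]
    push_cast
    apply Finset.sum_congr rfl
    intro x _
    split <;> simp
  unfold NOBDD.accepts
  rw [hreach, hrun]
  simp only [Set.mem_singleton_iff, exists_eq_left, Finset.mem_singleton]
  rw [Fin.natCast_eq_zero]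
  unfold MODf
  simp [Nat.dvd_iff_mod_eq_zero]

lemma modf_not_mem {n d : ℕ} (h1 : 1 < d) (h2 : d ≤ n / 2) :
    MODf n d ∉ NOBDDclass n (d - 1) := by
  rintro ⟨d', hd', M, hM⟩
  have hn : 2 * d ≤ n := by omega
  set k := d - 1 with hk
  have hkn : k < n := by omega
  have key : ∀ (i : Fin d) (j : ℕ), k + j ≤ n →
      ((∃ v ∈ lbPre M k (i : ℕ), lbAcc M k j v) ↔ ((i : ℕ) + j) % d = 0) := by
    intro i j hkj
    have hik : (i : ℕ) ≤ k := by have := i.isLt; omega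
    rw [← lb_accepts_iff M k (i : ℕ) j hik, hM]
    unfold MODf
    rw [lb_count M.ord k (i : ℕ) j hik hkn hkj]
    simp
  have hJlt : ∀ i : Fin d, (if (i : ℕ) = 0 then 0 else d - (i : ℕ)) ≤ d - 1 := by
    intro i
    have := i.isLt
    split <;> omega
  have hJmod : ∀ i : Fin d, ((i : ℕ) + (if (i : ℕ) = 0 then 0 else d - (i : ℕ))) % d = 0 := by
    intro i
    have := i.isLt
    rcases eq_or_ne (i : ℕ) 0 with h | h
    · simp [h]
    · rw [if_neg h]
      have hsum : (i : ℕ) + (d - (i : ℕ)) = d := by omega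
      rw [hsum, Nat.mod_self]
  have hex : ∀ i : Fin d, ∃ v, v ∈ lbPre M k (i : ℕ)
      ∧ lbAcc M k (if (i : ℕ) = 0 then 0 else d - (i : ℕ)) v := by
    intro i
    have hkj : k + (if (i : ℕ) = 0 then 0 else d - (i : ℕ)) ≤ n := by
      have := hJlt i; omega
    obtain ⟨v, hv1, hv2⟩ := (key i _ hkj).mpr (hJmod i)
    exact ⟨v, hv1, hv2⟩
  choose V hV1 hV2 using hex
  have hinj : Function.Injective V := by
    intro a b hab
    set t := (if (a : ℕ) = 0 then 0 else d - (a : ℕ)) with ht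
    have htd : t ≤ d - 1 := hJlt a
    have h1' : ((a : ℕ) + t) % d = 0 := hJmod a
    have hkj : k + t ≤ n := by omega
    have hacc : ∃ v ∈ lbPre M k (b : ℕ), lbAcc M k t v :=
      ⟨V b, hV1 b, hab ▸ hV2 a⟩
    have h2' : ((b : ℕ) + t) % d = 0 := (key b t hkj).mp hacc
    have d1 : d ∣ (a : ℕ) + t := Nat.dvd_of_mod_eq_zero h1'
    have d2 : d ∣ (b : ℕ) + t := Nat.dvd_of_mod_eq_zero h2'
    have hav := a.isLt
    have hbv := b.isLt
    have hval : (a : ℕ) = (b : ℕ) := by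
      rcases le_total (a : ℕ) (b : ℕ) with h | h
      · have hdvd := Nat.dvd_sub d2 d1
        have heq : (b : ℕ) + t - ((a : ℕ) + t) = (b : ℕ) - (a : ℕ) := by omega
        rw [heq] at hdvd
        have := Nat.eq_zero_of_dvd_of_lt hdvd
        omega
      · have hdvd := Nat.dvd_sub d1 d2
        have heq : (a : ℕ) + t - ((b : ℕ) + t) = (a : ℕ) - (b : ℕ) := by omega
        rw [heq] at hdvd
        have := Nat.eq_zero_of_dvd_of_lt hdvd
        omega
    exact Fin.ext hval
  have hcard := Fintype.card_le_of_injective V hinj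
  simp only [Fintype.card_fin] at hcard
  omega

end NWH

/-- For all `n, d` with `1 < d ≤ n/2`, there is a Boolean function computed by a
nondeterministic OBDD of width at most `d` but by none of width at most `d - 1`;
consequently `NOBDD^{d-1} ⊊ NOBDD^d`. -/
theorem nondeterministic_width_hierarchy (n d : ℕ) (h1 : 1 < d) (h2 : d ≤ n / 2) :
    (∃ f : (Fin n → Bool) → Bool, f ∈ NOBDDclass n d ∧ f ∉ NOBDDclass n (d - 1)) ∧
    NOBDDclass n (d - 1) ⊂ NOBDDclass n d := by
  have hmem : MODf n d ∈ NOBDDclass n d := NWH.modf_mem (by omega)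
  have hnot : MODf n d ∉ NOBDDclass n (d - 1) := NWH.modf_not_mem h1 h2
  refine ⟨⟨MODf n d, hmem, hnot⟩, ?_, fun hsub => hnot (hsub hmem)⟩
  rintro f ⟨d', hd', Mf, hMf⟩
  exact ⟨d', by omega, Mf, hMf⟩
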